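/- arXiv:1709.06630 — 2 statements merged into one kernel-verified Lean document; each statement's English description precedes it below -/
import Mathlib

section
/- Let E ⊂ ℂ be a compact set with Markov constants Mₙ (the norm of the differentiation operator on polynomials of degree at most n with sup norm on E). Let (Cₙ) be a sequence of reals with Cₙ ≥ 1, and let (aₙ)_{n≥0} be a pseudo Leja sequence in E of Edrei growth (Cₙ), i.e., Cₙ|wₙ(aₙ)| ≥ ‖wₙ‖_E for all n ≥ 1, where wₙ(z) = ∏_{k=0}^{n-1}(z - aₖ). Assume all aⱼ are distinct and Mₙ < ∞. Then the separation quantity σₙ = min_{0 ≤ j ≤ n-1} |aₙ - aⱼ| satisfies σₙ ≥ log(1 + 1/Cₙ)/Mₙ. -/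
open Polynomial Finset

theorem pseudo_leja_separation (E : Set ℂ) (hE : IsCompact E)
    (a : ℕ → ℂ) (haE : ∀ n, a n ∈ E) (hinj : Function.Injective a)
    (C : ℝ) (M : ℝ) (hC : 1 ≤ C) (hMpos : 0 < M)
    (n : ℕ) (hn : 1 ≤ n)
    (hM : ∀ p : Polynomial ℂ, p.natDegree ≤ n →
      sSup ((fun z => ‖(Polynomial.derivative p).eval z‖) '' E) ≤
        M * sSup ((fun z => ‖p.eval z‖) '' E))
    (hleja : sSup ((fun z => ‖∏ k ∈ Finset.range n, (z - a k)‖) '' E) ≤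
      C * ‖∏ k ∈ Finset.range n, (a n - a k)‖) :
    ∀ j < n, Real.log (1 + 1 / C) / M ≤ ‖a n - a j‖ := by
  intro j hj
  set w : Polynomial ℂ := ∏ k ∈ Finset.range n, (X - Polynomial.C (a k)) with hw
  set S : Polynomial ℂ → ℝ := fun p => sSup ((fun z => ‖p.eval z‖) '' E) with hS
  have hwe : ∀ z : ℂ, w.eval z = ∏ k ∈ Finset.range n, (z - a k) := by
    intro z; simp [hw, Polynomial.eval_prod]
  -- membership bound
  have hsup : ∀ (p : Polynomial ℂ), ∀ z ∈ E, ‖p.eval z‖ ≤ S p := by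
    intro p z hz
    apply le_csSup
    · exact (hE.image (continuous_norm.comp (p.continuous))).bddAbove
    · exact ⟨z, hz, rfl⟩
  have hwdeg : w.natDegree = n := by
    simp [hw, Polynomial.natDegree_prod_of_monic _ _ (fun k _ => monic_X_sub_C (a k))]
  have hCpos : (0 : ℝ) < C := lt_of_lt_of_le one_pos hC
  -- degree of iterated derivatives
  have hdegit : ∀ i : ℕ, (Polynomial.derivative^[i] w).natDegree ≤ n := by
    intro i
    induction i with
    | zero => simp [hwdeg]
    | succ i ih =>
      rw [Function.iterate_succ_apply']
      exact le_trans (Polynomial.natDegree_derivative_le _) (le_trans (Nat.sub_le _ 1) ih)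
  -- iterated derivative sup bound
  have hit : ∀ i : ℕ, S (Polynomial.derivative^[i] w) ≤ M ^ i * S w := by
    intro i
    induction i with
    | zero => simp [hS]
    | succ i ih =>
      rw [Function.iterate_succ_apply']
      calc S (Polynomial.derivative (Polynomial.derivative^[i] w)) ≤
            M * S (Polynomial.derivative^[i] w) := hM _ (hdegit i)
        _ ≤ M * (M ^ i * S w) := by
            exact mul_le_mul_of_nonneg_left ih hMpos.le
        _ = M ^ (i + 1) * S w := by ring
  set δ : ℝ := ‖a n - a j‖ with hδ
  have hδ0 : 0 ≤ δ := norm_nonneg _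
  have hSw0 : 0 ≤ S w := le_trans (norm_nonneg _) (hsup w (a n) (haE n))
  -- coefficient bounds
  have hcoeff : ∀ i : ℕ, ‖(Polynomial.taylor (a j) w).coeff i‖ ≤
      M ^ i * S w / (i.factorial : ℝ) := by
    intro i
    rw [Polynomial.taylor_coeff]
    have h1 : (i.factorial : ℂ) * (Polynomial.hasseDeriv i w).eval (a j)
        = (Polynomial.derivative^[i] w).eval (a j) := by
      rw [← Polynomial.factorial_smul_hasseDeriv]
      simp [Polynomial.smul_eval]
    have h2 : (i.factorial : ℝ) * ‖(Polynomial.hasseDeriv i w).eval (a j)‖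
        = ‖(Polynomial.derivative^[i] w).eval (a j)‖ := by
      rw [← h1, norm_mul]
      simp
    rw [le_div_iff₀ (by positivity), mul_comm _ ((i.factorial : ℝ)), h2]
    exact le_trans (hsup _ _ (haE j)) (hit i)
  -- Taylor expansion
  have hwj : w.eval (a j) = 0 := by
    rw [hwe]
    exact Finset.prod_eq_zero (Finset.mem_range.mpr hj) (by ring)
  have heval : w.eval (a n) = ∑ i ∈ Finset.range (n + 1),
      (Polynomial.taylor (a j) w).coeff i * (a n - a j) ^ i := by
    have hdt : (Polynomial.taylor (a j) w).natDegree < n + 1 := by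
      rw [Polynomial.natDegree_taylor, hwdeg]; omega
    rw [← Polynomial.eval_eq_sum_range' hdt, Polynomial.taylor_eval]
    ring_nf
  have hcoeff0 : (Polynomial.taylor (a j) w).coeff 0 = 0 := by
    rw [Polynomial.taylor_coeff]; simpa using hwj
  -- main bound
  have hmain : ‖w.eval (a n)‖ ≤ (Real.exp (M * δ) - 1) * S w := by
    calc ‖w.eval (a n)‖
        ≤ ∑ i ∈ Finset.range (n + 1),
            ‖(Polynomial.taylor (a j) w).coeff i * (a n - a j) ^ i‖ := by
          rw [heval]; exact norm_sum_le _ _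
      _ = ∑ i ∈ Finset.range n,
            ‖(Polynomial.taylor (a j) w).coeff (i + 1) * (a n - a j) ^ (i + 1)‖ := by
          rw [Finset.sum_range_succ']
          simp [hcoeff0]
      _ ≤ ∑ i ∈ Finset.range n, (M * δ) ^ (i + 1) / ((i + 1).factorial : ℝ) * S w := by
          apply Finset.sum_le_sum
          intro i _
          rw [norm_mul, norm_pow]
          calc ‖(Polynomial.taylor (a j) w).coeff (i + 1)‖ * δ ^ (i + 1)
              ≤ M ^ (i + 1) * S w / ((i + 1).factorial : ℝ) * δ ^ (i + 1) :=
                mul_le_mul_of_nonneg_right (hcoeff (i + 1)) (by positivity)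
            _ = (M * δ) ^ (i + 1) / ((i + 1).factorial : ℝ) * S w := by
                rw [mul_pow]; ring
      _ = (∑ i ∈ Finset.range n, (M * δ) ^ (i + 1) / ((i + 1).factorial : ℝ)) * S w := by
          rw [← Finset.sum_mul]
      _ ≤ (Real.exp (M * δ) - 1) * S w := by
          apply mul_le_mul_of_nonneg_right _ hSw0
          have h := Real.sum_le_exp_of_nonneg (by positivity : (0:ℝ) ≤ M * δ) (n + 1)
          rw [Finset.sum_range_succ'] at h
          simp only [Nat.factorial_zero, pow_zero, Nat.cast_one, div_one] at h
          linarith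
  -- positivity of w(a n)
  have hwn : w.eval (a n) ≠ 0 := by
    rw [hwe]
    apply Finset.prod_ne_zero_iff.mpr
    intro k hk h0
    have hk' := Finset.mem_range.mp hk
    have : a n = a k := sub_eq_zero.mp h0
    exact absurd (hinj this) (by omega)
  have hwnpos : 0 < ‖w.eval (a n)‖ := by
    simpa using hwn
  have hSwle : S w ≤ C * ‖w.eval (a n)‖ := by
    have hfun : (fun z => ‖Polynomial.eval z w‖) =
        fun z => ‖∏ k ∈ Finset.range n, (z - a k)‖ := by
      funext z; rw [hwe]
    rw [hS]
    simp only [hfun, hwe]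
    exact hleja
  have hSwpos : 0 < S w := lt_of_lt_of_le hwnpos (hsup w (a n) (haE n))
  -- combine
  have hkey : S w ≤ C * ((Real.exp (M * δ) - 1) * S w) :=
    le_trans hSwle (mul_le_mul_of_nonneg_left hmain hCpos.le)
  have h1 : 1 ≤ C * (Real.exp (M * δ) - 1) := by
    nlinarith
  have h2 : 1 + 1 / C ≤ Real.exp (M * δ) := by
    have : 1 / C ≤ Real.exp (M * δ) - 1 := by
      rw [div_le_iff₀ hCpos]
      nlinarith
    linarith
  have h3 : Real.log (1 + 1 / C) ≤ M * δ := by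
    calc Real.log (1 + 1 / C) ≤ Real.log (Real.exp (M * δ)) :=
          Real.log_le_log (by positivity) h2
      _ = M * δ := Real.log_exp _
  rw [div_le_iff₀' hMpos]
  exact h3
end

section
/- Let E ⊂ ℂ be a compact set containing at least two points, (aₙ)_{n≥0} a sequence in E with distinct terms, Cₙ ≥ 1 reals such that Cₙ|wₙ(aₙ)| ≥ ‖wₙ‖_E where wₙ(z) = ∏_{k=0}^{n-1}(z-aₖ), and Mₙ₊₁ the Markov constant of degree n+1 for E (assumed finite). Write Δ⁽ᵏ⁾ = ∏_{j∈{0,...,n}\{k}}(aₖ - aⱼ). Then ‖wₙ‖_E/Cₙ ≤ max_{0≤k≤n} |Δ⁽ᵏ⁾| ≤ Mₙ₊₁·‖wₙ₊₁‖_E. -/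
open Polynomial

lemma derivative_finset_prod {R ι : Type*} [CommRing R] [DecidableEq ι]
    (s : Finset ι) (f : ι → R[X]) :
    derivative (∏ i ∈ s, f i) = ∑ i ∈ s, (∏ j ∈ s.erase i, f j) * derivative (f i) := by
  rw [Finset.prod_eq_multiset_prod, derivative_prod, Finset.sum_eq_multiset_sum]
  congr 1

theorem max_delta_bounds (E : Set ℂ) (hE : IsCompact E)
    (hE2 : ∃ a ∈ E, ∃ b ∈ E, a ≠ b)
    (a : ℕ → ℂ) (haE : ∀ n, a n ∈ E) (hinj : Function.Injective a)
    (n : ℕ) (C M : ℝ) (hC : 1 ≤ C) (hMpos : 0 < M)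
    (hleja : sSup ((fun z => ‖∏ k ∈ Finset.range n, (z - a k)‖) '' E) ≤
      C * ‖∏ k ∈ Finset.range n, (a n - a k)‖)
    (hM : ∀ p : Polynomial ℂ, p ≠ 0 → p.natDegree ≤ n + 1 →
      sSup ((fun z => ‖(Polynomial.derivative p).eval z‖) '' E) ≤
        M * sSup ((fun z => ‖p.eval z‖) '' E)) :
    sSup ((fun z => ‖∏ k ∈ Finset.range n, (z - a k)‖) '' E) / C ≤
      (Finset.range (n + 1)).sup' (by simp)
        (fun k => ‖∏ j ∈ (Finset.range (n + 1)).erase k, (a k - a j)‖) ∧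
    (Finset.range (n + 1)).sup' (by simp)
        (fun k => ‖∏ j ∈ (Finset.range (n + 1)).erase k, (a k - a j)‖) ≤
      M * sSup ((fun z => ‖∏ k ∈ Finset.range (n + 1), (z - a k)‖) '' E) := by
  have hCpos : (0:ℝ) < C := lt_of_lt_of_le one_pos hC
  set p : Polynomial ℂ := ∏ k ∈ Finset.range (n+1), (X - Polynomial.C (a k)) with hp
  have hne : ∀ k ∈ Finset.range (n+1), (X - Polynomial.C (a k)) ≠ 0 :=
    fun k _ => X_sub_C_ne_zero _
  have hp0 : p ≠ 0 := Finset.prod_ne_zero_iff.mpr hne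
  have hdeg : p.natDegree ≤ n + 1 := by
    rw [hp, natDegree_prod _ _ hne]
    simp
  have heval : ∀ z, p.eval z = ∏ k ∈ Finset.range (n+1), (z - a k) := by
    intro z; simp [hp, eval_prod]
  have hderiv : ∀ k ∈ Finset.range (n+1),
      (Polynomial.derivative p).eval (a k)
        = ∏ j ∈ (Finset.range (n+1)).erase k, (a k - a j) := by
    intro k hk
    rw [hp, derivative_finset_prod]
    rw [eval_finset_sum]
    rw [Finset.sum_eq_single k]
    · simp [eval_prod]
    · intro i hi hik
      have hki : k ∈ (Finset.range (n+1)).erase i := Finset.mem_erase.mpr ⟨fun h => hik h.symm, hk⟩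
      simp only [eval_mul, eval_prod]
      rw [Finset.prod_eq_zero hki (by simp)]
      simp
    · intro h; exact absurd hk h
  have herase : (Finset.range (n+1)).erase n = Finset.range n := by
    rw [Finset.range_add_one, Finset.erase_insert (by simp)]
  constructor
  · rw [div_le_iff₀ hCpos]
    calc sSup ((fun z => ‖∏ k ∈ Finset.range n, (z - a k)‖) '' E)
        ≤ C * ‖∏ k ∈ Finset.range n, (a n - a k)‖ := hleja
      _ ≤ C * (Finset.range (n + 1)).sup' (by simp)
            (fun k => ‖∏ j ∈ (Finset.range (n + 1)).erase k, (a k - a j)‖) := by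
          apply mul_le_mul_of_nonneg_left _ (le_of_lt hCpos)
          have := Finset.le_sup' (f := fun k => ‖∏ j ∈ (Finset.range (n + 1)).erase k, (a k - a j)‖) (Finset.self_mem_range_succ n)
          rwa [herase] at this
      _ = _ := mul_comm _ _
  · apply Finset.sup'_le
    intro k hk
    have hbdd : BddAbove ((fun z => ‖(Polynomial.derivative p).eval z‖) '' E) :=
      (hE.image ((Polynomial.derivative p).continuous.norm)).bddAbove
    have h1 : ‖∏ j ∈ (Finset.range (n+1)).erase k, (a k - a j)‖
        ≤ sSup ((fun z => ‖(Polynomial.derivative p).eval z‖) '' E) := by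
      rw [← hderiv k hk]
      exact le_csSup hbdd ⟨a k, haE k, rfl⟩
    refine h1.trans ?_
    have := hM p hp0 hdeg
    simpa [heval] using this
end
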